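/- Let d ≥ 1, let Ω ⊆ ℝ^d be a bounded measurable set, let ρ : ℝ^d → ℝ be a nonnegative integrable function with associated measure π(A) = ∫_A ρ(x) dx, let dist : ℝ^d × ℝ^d → ℝ be a continuous nonnegative function, let y_1, …, y_K ∈ ℝ^d, and let w ∈ ℝ^K. Let V_k = {x ∈ Ω : dist(x,y_k) − w_k ≤ dist(x,y_j) − w_j for all j, with strict inequality for all j < k} be the tie-broken power cells. Then for every collection R_1, …, R_K of pairwise disjoint measurable subsets of Ω with ∪_k R_k = Ω and π(R_k) = π(V_k) for all k, one has Σ_{k=1}^K ∫_{V_k} dist(x,y_k) ρ(x) dx ≤ Σ_{k=1}^K ∫_{R_k} dist(x,y_k) ρ(x) dx; that is, the power diagram minimizes the total transport cost Q(R_1,…,R_K) = Σ_k ∫_{R_k} dist(x,y_k) dπ among all measurable partitions of Ω with the same capacities. -/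
import Mathlib


open MeasureTheory

/-- The tie-broken power cell of the generator `y k` with weight `w k` in `Ω`: points of `Ω`
where `dst x (y k) - w k` is minimal among all generators, with ties assigned to the
smallest index. -/
def powerCell {d K : ℕ} (Ω : Set (EuclideanSpace ℝ (Fin d)))
    (dst : EuclideanSpace ℝ (Fin d) → EuclideanSpace ℝ (Fin d) → ℝ)
    (y : Fin K → EuclideanSpace ℝ (Fin d)) (w : Fin K → ℝ) (k : Fin K) :
    Set (EuclideanSpace ℝ (Fin d)) :=
  {x ∈ Ω | (∀ j, dst x (y k) - w k ≤ dst x (y j) - w j) ∧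
    ∀ j, j < k → dst x (y k) - w k < dst x (y j) - w j}

theorem stmt_18 (d K : ℕ) (hd : 1 ≤ d) (hK : 0 < K)
    (Ω : Set (EuclideanSpace ℝ (Fin d)))
    (hΩb : Bornology.IsBounded Ω) (hΩm : MeasurableSet Ω)
    (ρ : EuclideanSpace ℝ (Fin d) → ℝ) (hρ0 : ∀ x, 0 ≤ ρ x) (hρi : Integrable ρ)
    (dst : EuclideanSpace ℝ (Fin d) → EuclideanSpace ℝ (Fin d) → ℝ)
    (hdstc : Continuous fun p : EuclideanSpace ℝ (Fin d) × EuclideanSpace ℝ (Fin d) => dst p.1 p.2)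
    (hdst0 : ∀ x y, 0 ≤ dst x y)
    (y : Fin K → EuclideanSpace ℝ (Fin d)) (w : Fin K → ℝ)
    (R : Fin K → Set (EuclideanSpace ℝ (Fin d)))
    (hRm : ∀ k, MeasurableSet (R k))
    (hRsub : ∀ k, R k ⊆ Ω)
    (hRdisj : Pairwise fun k l => Disjoint (R k) (R l))
    (hRunion : (⋃ k, R k) = Ω)
    (hRcap : ∀ k, (∫ x in R k, ρ x) = ∫ x in powerCell Ω dst y w k, ρ x) :
    ∑ k, ∫ x in powerCell Ω dst y w k, dst x (y k) * ρ x
      ≤ ∑ k, ∫ x in R k, dst x (y k) * ρ x := by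
  classical
  set V : Fin K → Set (EuclideanSpace ℝ (Fin d)) := powerCell Ω dst y w with hVdef
  have hVsub : ∀ k, V k ⊆ Ω := fun k x hx => hx.1
  have hcont : ∀ k, Continuous fun x => dst x (y k) := fun k =>
    hdstc.comp (continuous_id.prodMk continuous_const)
  have hVm : ∀ k, MeasurableSet (V k) := by
    intro k
    have h1 : MeasurableSet {x | ∀ j, dst x (y k) - w k ≤ dst x (y j) - w j} := by
      rw [Set.setOf_forall]
      exact MeasurableSet.iInter fun j => measurableSet_le
        ((hcont k).sub continuous_const).measurable
        ((hcont j).sub continuous_const).measurable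
    have h2 : MeasurableSet {x | ∀ j, j < k → dst x (y k) - w k < dst x (y j) - w j} := by
      rw [Set.setOf_forall]
      refine MeasurableSet.iInter fun j => ?_
      by_cases h : j < k
      · simp only [h, true_implies]
        exact measurableSet_lt ((hcont k).sub continuous_const).measurable
          ((hcont j).sub continuous_const).measurable
      · simp [h]
    have : V k = Ω ∩ ({x | ∀ j, dst x (y k) - w k ≤ dst x (y j) - w j} ∩
        {x | ∀ j, j < k → dst x (y k) - w k < dst x (y j) - w j}) := rfl
    rw [this]
    exact hΩm.inter (h1.inter h2)
  have hVdisj : Pairwise (Function.onFun Disjoint V) := by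
    intro k l hkl
    rw [Function.onFun, Set.disjoint_left]
    intro x hxk hxl
    rcases lt_or_gt_of_ne hkl with h | h
    · exact absurd (hxk.2.1 l) (not_le.mpr (hxl.2.2 k h))
    · exact absurd (hxl.2.1 k) (not_le.mpr (hxk.2.2 l h))
  have hVunion : (⋃ k, V k) = Ω := by
    apply Set.Subset.antisymm (Set.iUnion_subset hVsub)
    intro x hx
    set f : Fin K → ℝ := fun j => dst x (y j) - w j with hf
    have hne : (Finset.univ.filter fun j => ∀ i, f j ≤ f i).Nonempty := by
      obtain ⟨j, -, hj⟩ := Finset.exists_min_image Finset.univ f ⟨⟨0, hK⟩, Finset.mem_univ _⟩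
      exact ⟨j, Finset.mem_filter.mpr ⟨Finset.mem_univ _, fun i => hj i (Finset.mem_univ _)⟩⟩
    set k := (Finset.univ.filter fun j => ∀ i, f j ≤ f i).min' hne with hk
    have hkmem := Finset.min'_mem _ hne
    have hkmin : ∀ j, f k ≤ f j := (Finset.mem_filter.mp hkmem).2
    refine Set.mem_iUnion.mpr ⟨k, hx, hkmin, ?_⟩
    intro j hj
    by_contra hcon
    push_neg at hcon
    have hfeq : f j = f k := le_antisymm hcon (hkmin j)
    have hjmem : j ∈ Finset.univ.filter fun j => ∀ i, f j ≤ f i :=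
      Finset.mem_filter.mpr ⟨Finset.mem_univ _, fun i => hfeq ▸ hkmin i⟩
    exact absurd (Finset.min'_le _ j hjmem) (not_le.mpr hj)
  -- integrability
  have hInt : ∀ k, IntegrableOn (fun x => dst x (y k) * ρ x) Ω := by
    intro k
    obtain ⟨C, hC⟩ : ∃ C, ∀ x ∈ Ω, dst x (y k) ≤ C := by
      rcases Ω.eq_empty_or_nonempty with h | h
      · exact ⟨0, by simp [h]⟩
      · obtain ⟨z, hz, hzmax⟩ := hΩb.isCompact_closure.exists_isMaxOn h.closure
          (hcont k).continuousOn
        exact ⟨dst z (y k), fun x hx => hzmax (subset_closure hx)⟩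
    refine Integrable.mono ((hρi.const_mul C).integrableOn) ?_ ?_
    · exact ((hcont k).aestronglyMeasurable.mul hρi.aestronglyMeasurable).restrict
    · rw [ae_restrict_iff' hΩm]
      filter_upwards with x hx
      rw [Real.norm_eq_abs, Real.norm_eq_abs, abs_mul, abs_mul,
        abs_of_nonneg (hdst0 _ _), abs_of_nonneg (hρ0 x)]
      have h1 : dst x (y k) ≤ |C| := le_trans (hC x hx) (le_abs_self C)
      have h2 : 0 ≤ |ρ x| := abs_nonneg _
      nlinarith [hdst0 x (y k), hρ0 x]
  have hρInt : IntegrableOn ρ Ω := hρi.integrableOn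
  -- generic decomposition lemma
  have hdecomp : ∀ (f : EuclideanSpace ℝ (Fin d) → ℝ)
      (S : Fin K → Set (EuclideanSpace ℝ (Fin d))),
      (∀ i, MeasurableSet (S i)) → Pairwise (Function.onFun Disjoint S) →
      (⋃ i, S i) = Ω → IntegrableOn f Ω →
      ∀ s : Set (EuclideanSpace ℝ (Fin d)), MeasurableSet s → s ⊆ Ω →
      (∫ x in s, f x) = ∑ i, ∫ x in s ∩ S i, f x := by
    intro f S hSm hSd hSu hf s hsm hsub
    have h1 : s = ⋃ i, s ∩ S i := by
      rw [← Set.inter_iUnion, hSu, Set.inter_eq_left.mpr hsub]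
    have hd2 : Pairwise (Function.onFun Disjoint fun i => s ∩ S i) := fun k l h =>
      (hSd h).mono Set.inter_subset_right Set.inter_subset_right
    conv_lhs => rw [h1]
    rw [integral_iUnion (fun i => hsm.inter (hSm i)) hd2
      (hf.mono_set (by rw [← h1]; exact hsub)), tsum_fintype]
  -- key pointwise-derived inequality on cells of the refinement
  have key : ∀ k j, (∫ x in V k ∩ R j, dst x (y k) * ρ x)
      ≤ (∫ x in V k ∩ R j, dst x (y j) * ρ x) + (w k - w j) * ∫ x in V k ∩ R j, ρ x := by
    intro k j
    have hm : MeasurableSet (V k ∩ R j) := (hVm k).inter (hRm j)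
    have hsub : V k ∩ R j ⊆ Ω := Set.Subset.trans Set.inter_subset_left (hVsub k)
    have hIj : IntegrableOn (fun x => dst x (y j) * ρ x) (V k ∩ R j) :=
      (hInt j).mono_set hsub
    have hIρ : IntegrableOn ρ (V k ∩ R j) := hρInt.mono_set hsub
    have h1 : (∫ x in V k ∩ R j, dst x (y k) * ρ x)
        ≤ ∫ x in V k ∩ R j, dst x (y j) * ρ x + (w k - w j) * ρ x := by
      refine setIntegral_mono_on ((hInt k).mono_set hsub) (hIj.add (hIρ.const_mul _)) hm ?_
      intro x hx
      have hle := hx.1.2.1 j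
      nlinarith [hρ0 x]
    have h2 : (∫ x in V k ∩ R j, dst x (y j) * ρ x + (w k - w j) * ρ x)
        = (∫ x in V k ∩ R j, dst x (y j) * ρ x) + (w k - w j) * ∫ x in V k ∩ R j, ρ x := by
      rw [integral_add hIj (hIρ.const_mul _), integral_const_mul]
    linarith
  -- main chain
  calc ∑ k, ∫ x in V k, dst x (y k) * ρ x
      = ∑ k, ∑ j, ∫ x in V k ∩ R j, dst x (y k) * ρ x :=
        Finset.sum_congr rfl fun k _ =>
          hdecomp _ R hRm hRdisj hRunion (hInt k) (V k) (hVm k) (hVsub k)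
    _ ≤ ∑ k, ∑ j, ((∫ x in V k ∩ R j, dst x (y j) * ρ x)
          + (w k - w j) * ∫ x in V k ∩ R j, ρ x) := by
        refine Finset.sum_le_sum fun k _ => Finset.sum_le_sum fun j _ => key k j
    _ = (∑ k, ∑ j, ∫ x in V k ∩ R j, dst x (y j) * ρ x)
          + ∑ k, ∑ j, (w k - w j) * ∫ x in V k ∩ R j, ρ x := by
        rw [← Finset.sum_add_distrib]
        exact Finset.sum_congr rfl fun k _ => Finset.sum_add_distrib
    _ = ∑ j, ∫ x in R j, dst x (y j) * ρ x := by
        have hA : (∑ k, ∑ j, ∫ x in V k ∩ R j, dst x (y j) * ρ x)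
            = ∑ j, ∫ x in R j, dst x (y j) * ρ x := by
          rw [Finset.sum_comm]
          refine Finset.sum_congr rfl fun j _ => ?_
          rw [hdecomp _ V hVm hVdisj hVunion (hInt j) (R j) (hRm j) (hRsub j)]
          exact Finset.sum_congr rfl fun k _ => by rw [Set.inter_comm]
        have hB : (∑ k, ∑ j, (w k - w j) * ∫ x in V k ∩ R j, ρ x) = 0 := by
          have hVρ : ∀ k, (∫ x in V k, ρ x) = ∑ j, ∫ x in V k ∩ R j, ρ x := fun k =>
            hdecomp _ R hRm hRdisj hRunion hρInt (V k) (hVm k) (hVsub k)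
          have hRρ : ∀ j, (∫ x in R j, ρ x) = ∑ k, ∫ x in V k ∩ R j, ρ x := fun j => by
            rw [hdecomp _ V hVm hVdisj hVunion hρInt (R j) (hRm j) (hRsub j)]
            exact Finset.sum_congr rfl fun k _ => by rw [Set.inter_comm]
          have : (∑ k, ∑ j, (w k - w j) * ∫ x in V k ∩ R j, ρ x)
              = (∑ k, w k * ∫ x in V k, ρ x) - ∑ j, w j * ∫ x in R j, ρ x := by
            simp_rw [sub_mul, Finset.sum_sub_distrib, ← Finset.mul_sum]
            rw [Finset.sum_comm (f := fun k j => w j * ∫ x in V k ∩ R j, ρ x)]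
            simp_rw [← hVρ, ← Finset.mul_sum, ← hRρ]
          rw [this]
          have : (∑ j, w j * ∫ x in R j, ρ x) = ∑ k, w k * ∫ x in V k, ρ x :=
            Finset.sum_congr rfl fun j _ => by rw [hRcap j]
          rw [this, sub_self]
        rw [hA, hB, add_zero]
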